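/- With V(L(n)) and H(L(n)) as above and 0 < d < 1/2, let P be any convex set with V(L(n)) ⊆ P ⊆ H(L(n)). Then for each a ∈ {0,1}^n, the supremum z_p of φ(a)^T x + d·w over (x,w) ∈ P satisfies: z_p = a^T 1 + d if a ∈ L(n), and z_p ≤ a^T 1 + d with z_p ≥ a^T 1 if a ∉ L(n); moreover when a ∈ L(n) the value a^T 1 + d is attained. Hence membership of a in L(n) is decided by whether the maximum over P equals a^T 1 + d (when a∈L) versus being at most a^T 1 from below on V (noting z_v = a^T 1 when a∉L). -/
import Mathlib


open scoped Classical
open scoped Classical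

/-- 0/1 real vector corresponding to a boolean vector. -/
def bvec {n : ℕ} (x : Fin n → Bool) : Fin n → ℝ := fun j => if x j then 1 else 0

/-- ±1 vector `φ(x) = 2x − 1`. -/
def pmvec {n : ℕ} (x : Fin n → Bool) : Fin n → ℝ := fun j => if x j then 1 else -1

/-- Inner polytope `V(L(n)) = conv{(x, ψ(x)) : x ∈ {0,1}ⁿ}`. -/
noncomputable def Vpoly (n : ℕ) (L : Set (Fin n → Bool)) : Set ((Fin n → ℝ) × ℝ) :=
  convexHull ℝ {p | ∃ b : Fin n → Bool, p = (bvec b, if b ∈ L then (1 : ℝ) else 0)}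

/-- Outer polytope `H(L(n))`. -/
noncomputable def Hpoly (n : ℕ) (L : Set (Fin n → Bool)) (d : ℝ) : Set ((Fin n → ℝ) × ℝ) :=
  {p | ∀ a : Fin n → Bool,
    (∑ i, pmvec a i * p.1 i) + d * p.2 ≤ (∑ i, bvec a i) + (if a ∈ L then d else 0)}

theorem sandwich_decides_membership
    (n : ℕ) (L : Set (Fin n → Bool)) (d : ℝ) (hd0 : 0 < d) (hd1 : d < 1 / 2)
    (P : Set ((Fin n → ℝ) × ℝ))
    (hVP : Vpoly n L ⊆ P) (hPH : P ⊆ Hpoly n L d) (a : Fin n → Bool) :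
    (a ∈ L →
      (∃ p ∈ P, (∑ i, pmvec a i * p.1 i) + d * p.2 = (∑ i, bvec a i) + d) ∧
      ∀ p ∈ P, (∑ i, pmvec a i * p.1 i) + d * p.2 ≤ (∑ i, bvec a i) + d) ∧
    (a ∉ L →
      (∀ p ∈ P, (∑ i, pmvec a i * p.1 i) + d * p.2 ≤ (∑ i, bvec a i) + d) ∧
      (∃ p ∈ P, (∑ i, bvec a i) ≤ (∑ i, pmvec a i * p.1 i) + d * p.2)) := by
  -- the vertex point corresponding to `a`
  set pa : (Fin n → ℝ) × ℝ := (bvec a, if a ∈ L then (1 : ℝ) else 0) with hpa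
  have hmem : pa ∈ P := by
    apply hVP
    exact subset_convexHull ℝ _ ⟨a, rfl⟩
  have hsum : (∑ i, pmvec a i * pa.1 i) = ∑ i, bvec a i := by
    apply Finset.sum_congr rfl
    intro i _
    simp [pmvec, bvec, pa]
    by_cases h : a i <;> simp [h]
  constructor
  · intro haL
    constructor
    · exact ⟨pa, hmem, by simp [hsum, pa, haL]⟩
    · intro p hp
      have := hPH hp a
      simpa [haL] using this
  · intro haL
    constructor
    · intro p hp
      have := hPH hp a
      simp only [haL, if_neg haL, if_false] at this
      linarith
    · exact ⟨pa, hmem, by simp [hsum, pa, haL]⟩
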